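/- arXiv:2009.10008 — 3 statements merged into one kernel-verified Lean document; each statement's English description precedes it below -/
import Mathlib

section
/- ResNet input–output Jacobian bound. Consider the ResNet with differentiable activation satisfying |φ'(z)| ≤ C_φ for all z, and with parameters satisfying the spectral bounds. Then the input–output Jacobian ∂f/∂x = (σ_w/√n)·w^{(L+1)ᵀ} · ( Π_{ℓ=1}^{L} ( I_n + α·(σ_v/√n)·V^{(ℓ)}·diag{φ'(g^{(ℓ)})}·(σ_w/√n)·W^{(ℓ)} ) ) · (1/√d)·U satisfies ‖∂f/∂x‖ ≤ 2σ_w·(1 + 2√(n/d))·(1 + 9α·C_φ·σ_v·σ_w)^L. -/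
open MeasureTheory ProbabilityTheory Filter

noncomputable section

/-- Index type for all ResNet parameters: w^{(L+1)}, {W^{(ℓ)}}, {V^{(ℓ)}}, U. -/
abbrev ParamIdx (n L d : ℕ) : Type :=
  (Fin n) ⊕ (Fin L × Fin n × Fin n) ⊕ (Fin L × Fin n × Fin n) ⊕ (Fin n × Fin d)

/-- The full (vectorized) parameter vector. -/
abbrev Params (n L d : ℕ) : Type := ParamIdx n L d → ℝ

/-- Last-layer weight vector w^{(L+1)}. -/
def wOut {n L d : ℕ} (θ : Params n L d) : Fin n → ℝ := fun i => θ (Sum.inl i)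

/-- W^{(ℓ)} for ℓ = 1,…,L (zero outside this range). -/
def Wmat {n L d : ℕ} (θ : Params n L d) (ℓ : ℕ) : Matrix (Fin n) (Fin n) ℝ :=
  if h : 1 ≤ ℓ ∧ ℓ ≤ L then
    Matrix.of fun i j => θ (Sum.inr (Sum.inl (⟨ℓ - 1, by omega⟩, i, j)))
  else 0

/-- V^{(ℓ)} for ℓ = 1,…,L (zero outside this range). -/
def Vmat {n L d : ℕ} (θ : Params n L d) (ℓ : ℕ) : Matrix (Fin n) (Fin n) ℝ :=
  if h : 1 ≤ ℓ ∧ ℓ ≤ L then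
    Matrix.of fun i j => θ (Sum.inr (Sum.inr (Sum.inl (⟨ℓ - 1, by omega⟩, i, j))))
  else 0

/-- Input lifting matrix U. -/
def Umat {n L d : ℕ} (θ : Params n L d) : Matrix (Fin n) (Fin d) ℝ :=
  Matrix.of fun i j => θ (Sum.inr (Sum.inr (Sum.inr (i, j))))

/-- Euclidean (ℓ²) norm of a finite vector. -/
def l2norm {k : ℕ} (v : Fin k → ℝ) : ℝ := Real.sqrt (∑ i, (v i) ^ 2)

/-- Euclidean norm of a full parameter vector. -/
def paramNorm {n L d : ℕ} (θ : Params n L d) : ℝ := Real.sqrt (∑ i, (θ i) ^ 2)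

/-- Spectral (operator) norm of a matrix. -/
def specNorm {m k : ℕ} (A : Matrix (Fin m) (Fin k) ℝ) : ℝ :=
  sSup ((fun v => l2norm (A.mulVec v)) '' {v | l2norm v ≤ 1})

/-- Smallest singular value of a matrix. -/
def singMin {m k : ℕ} (A : Matrix (Fin m) (Fin k) ℝ) : ℝ :=
  sInf ((fun v => l2norm (A.mulVec v)) '' {v | l2norm v = 1})

/-- Frobenius norm of a matrix. -/
def frobNorm {m k : ℕ} (A : Matrix (Fin m) (Fin k) ℝ) : ℝ :=
  Real.sqrt (∑ i, ∑ j, (A i j) ^ 2)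

/-- Layer activations x^{(ℓ)} of the ResNet. -/
def xvec {n L d : ℕ} (φ : ℝ → ℝ) (α σv σw : ℝ) (θ : Params n L d) (x : Fin d → ℝ) :
    ℕ → Fin n → ℝ
  | 0 => (Real.sqrt d)⁻¹ • (Umat θ).mulVec x
  | ℓ + 1 =>
      xvec φ α σv σw θ x ℓ +
        (α * σv / Real.sqrt n) • (Vmat θ (ℓ + 1)).mulVec
          (fun i => φ ((σw / Real.sqrt n) *
              (Wmat θ (ℓ + 1)).mulVec (xvec φ α σv σw θ x ℓ) i))

/-- Pre-activations g^{(ℓ)} of the ResNet (meaningful for ℓ = 1,…,L). -/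
def gvec {n L d : ℕ} (φ : ℝ → ℝ) (α σv σw : ℝ) (θ : Params n L d) (x : Fin d → ℝ)
    (ℓ : ℕ) : Fin n → ℝ :=
  (σw / Real.sqrt n) • (Wmat θ ℓ).mulVec (xvec φ α σv σw θ x (ℓ - 1))

/-- The ResNet output f(x;θ). -/
def fnet {n L d : ℕ} (φ : ℝ → ℝ) (α σv σw : ℝ) (θ : Params n L d) (x : Fin d → ℝ) : ℝ :=
  (σw / Real.sqrt n) * ∑ i, wOut θ i * xvec φ α σv σw θ x L i

/-- The i.i.d. standard Gaussian initialization measure on the parameters. -/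
def initMeasure (n L d : ℕ) : Measure (Params n L d) :=
  Measure.pi fun _ => gaussianReal 0 1

/-- Standard Gaussian on ℝ². -/
def stdGauss2 : Measure (ℝ × ℝ) := (gaussianReal 0 1).prod (gaussianReal 0 1)

/-- The centered bivariate Gaussian N(0,Σ) for Σ = [[K11,K12],[K12,K22]] positive
semidefinite, realized via the Cholesky factorization. -/
def biGauss (K11 K12 K22 : ℝ) : Measure (ℝ × ℝ) :=
  stdGauss2.map (fun z => (Real.sqrt K11 * z.1,
    (K12 / Real.sqrt K11) * z.1 + Real.sqrt (K22 - K12 ^ 2 / K11) * z.2))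

/-- T(Σ) = E_{(u,v)∼N(0,Σ)}[φ(u)φ(v)]. -/
def TT (φ : ℝ → ℝ) (K11 K12 K22 : ℝ) : ℝ :=
  ∫ uv, φ uv.1 * φ uv.2 ∂(biGauss K11 K12 K22)

/-- Ṫ(Σ) = E_{(u,v)∼N(0,Σ)}[φ'(u)φ'(v)]. -/
def TTdot (φ : ℝ → ℝ) (K11 K12 K22 : ℝ) : ℝ :=
  ∫ uv, deriv φ uv.1 * deriv φ uv.2 ∂(biGauss K11 K12 K22)

/-- The limiting GP kernels: `Kker … ℓ x y` is K^{(ℓ+1)}(x,y); in particular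
`Kker … 0 x y = K^{(1)}(x,y) = (σ_w²/d)·xᵀy` and `Kker … L x y = K^{(L+1)}(x,y)`. -/
def Kker (φ : ℝ → ℝ) (α σv σw : ℝ) {d : ℕ} : ℕ → (Fin d → ℝ) → (Fin d → ℝ) → ℝ
  | 0 => fun x y => σw ^ 2 / d * ∑ i, x i * y i
  | ℓ + 1 => fun x y =>
      Kker φ α σv σw ℓ x y + α ^ 2 * σv ^ 2 * σw ^ 2 *
        TT φ (Kker φ α σv σw ℓ x x) (Kker φ α σv σw ℓ x y) (Kker φ α σv σw ℓ y y)


/-- The spectral bounds on a parameter vector: ‖w^{(L+1)}‖₂ ≤ 2√n, ‖U‖ ≤ √d + 2√n, and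
‖W^{(ℓ)}‖, ‖V^{(ℓ)}‖ ≤ 3√n for ℓ = 1,…,L. -/
def SpectralBounds {n L d : ℕ} (θ : Params n L d) : Prop :=
  l2norm (wOut θ) ≤ 2 * Real.sqrt n ∧
  specNorm (Umat θ) ≤ Real.sqrt d + 2 * Real.sqrt n ∧
  ∀ ℓ : ℕ, 1 ≤ ℓ → ℓ ≤ L →
    specNorm (Wmat θ ℓ) ≤ 3 * Real.sqrt n ∧ specNorm (Vmat θ ℓ) ≤ 3 * Real.sqrt n

/-- The ℓ-th layer Jacobian ∂x^{(ℓ)}/∂x^{(ℓ-1)} = I + α(σ_v/√n)V^{(ℓ)}·diag{φ'(g^{(ℓ)})}·(σ_w/√n)W^{(ℓ)}. -/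
def layerJac {n L d : ℕ} (φ : ℝ → ℝ) (α σv σw : ℝ) (θ : Params n L d) (x : Fin d → ℝ)
    (ℓ : ℕ) : Matrix (Fin n) (Fin n) ℝ :=
  1 + (α * σv * σw / (n : ℝ)) •
    (Vmat θ ℓ * Matrix.diagonal (fun i => deriv φ (gvec φ α σv σw θ x ℓ i)) * Wmat θ ℓ)

/-- The product ∂x^{(m)}/∂x^{(0)} = Π_{ℓ=1}^{m} layerJac ℓ (leftmost factor ℓ = m). -/
def chainProd {n L d : ℕ} (φ : ℝ → ℝ) (α σv σw : ℝ) (θ : Params n L d) (x : Fin d → ℝ) :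
    ℕ → Matrix (Fin n) (Fin n) ℝ
  | 0 => 1
  | m + 1 => layerJac φ α σv σw θ x (m + 1) * chainProd φ α σv σw θ x m

/-- The input–output Jacobian ∂f/∂x of the ResNet (as a vector in ℝ^d):
(σ_w/√n)·w^{(L+1)ᵀ}·(Π_{ℓ=1}^{L} layerJac ℓ)·(1/√d)·U. -/
def ioJacResNet {n L d : ℕ} (φ : ℝ → ℝ) (α σv σw : ℝ) (θ : Params n L d) (x : Fin d → ℝ) :
    Fin d → ℝ :=
  (σw / Real.sqrt n * (Real.sqrt d)⁻¹) •
    (Umat θ).transpose.mulVec ((chainProd φ α σv σw θ x L).transpose.mulVec (wOut θ))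

namespace ResNetAux

lemma sq_le_imp {a b : ℝ} (ha : 0 ≤ a) (hb : 0 ≤ b) (h : a ^ 2 ≤ b ^ 2) : a ≤ b := by
  nlinarith

lemma l2norm_nonneg {k : ℕ} (v : Fin k → ℝ) : 0 ≤ l2norm v := Real.sqrt_nonneg _

lemma l2norm_sq {k : ℕ} (v : Fin k → ℝ) : l2norm v ^ 2 = ∑ i, (v i) ^ 2 := by
  rw [l2norm, Real.sq_sqrt (Finset.sum_nonneg fun i _ => sq_nonneg _)]

lemma l2norm_zero {k : ℕ} : l2norm (0 : Fin k → ℝ) = 0 := by simp [l2norm]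

lemma l2norm_eq_zero {k : ℕ} {v : Fin k → ℝ} (h : l2norm v = 0) : v = 0 := by
  have h2 : ∑ i, (v i) ^ 2 = 0 := by
    have hs := l2norm_sq v; rw [h] at hs; simpa using hs.symm
  funext i
  have := (Finset.sum_eq_zero_iff_of_nonneg (fun i _ => sq_nonneg (v i))).mp h2 i
    (Finset.mem_univ i)
  exact pow_eq_zero_iff (by norm_num) |>.mp this

lemma l2norm_smul {k : ℕ} (c : ℝ) (v : Fin k → ℝ) : l2norm (c • v) = |c| * l2norm v := by
  simp only [l2norm, Pi.smul_apply, smul_eq_mul, mul_pow, ← Finset.mul_sum]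
  rw [Real.sqrt_mul (sq_nonneg c), Real.sqrt_sq_eq_abs]

lemma l2norm_add_le {k : ℕ} (v w : Fin k → ℝ) : l2norm (v + w) ≤ l2norm v + l2norm w := by
  have key : ∀ u : Fin k → ℝ, l2norm u = ‖(WithLp.equiv 2 (Fin k → ℝ)).symm u‖ := by
    intro u; simp [l2norm, EuclideanSpace.norm_eq, Real.norm_eq_abs, sq_abs]
  have hvw : (WithLp.equiv 2 (Fin k → ℝ)).symm (v + w)
      = (WithLp.equiv 2 (Fin k → ℝ)).symm v + (WithLp.equiv 2 (Fin k → ℝ)).symm w := rfl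
  rw [key, key, key, hvw]; exact norm_add_le _ _

lemma dot_le {k : ℕ} (v w : Fin k → ℝ) :
    dotProduct v w ≤ l2norm v * l2norm w := by
  simpa [dotProduct, l2norm] using Real.sum_mul_le_sqrt_mul_sqrt Finset.univ v w

lemma frobNorm_nonneg {m k : ℕ} (A : Matrix (Fin m) (Fin k) ℝ) : 0 ≤ frobNorm A :=
  Real.sqrt_nonneg _

lemma frob_bound {m k : ℕ} (A : Matrix (Fin m) (Fin k) ℝ) (v : Fin k → ℝ) :
    l2norm (A.mulVec v) ≤ frobNorm A * l2norm v := by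
  refine sq_le_imp (l2norm_nonneg _) (mul_nonneg (frobNorm_nonneg _) (l2norm_nonneg _)) ?_
  rw [l2norm_sq, mul_pow, l2norm_sq]
  have hf : frobNorm A ^ 2 = ∑ i, ∑ j, (A i j) ^ 2 := by
    rw [frobNorm]; exact Real.sq_sqrt (Finset.sum_nonneg fun i _ =>
      Finset.sum_nonneg fun j _ => sq_nonneg _)
  rw [hf, Finset.sum_mul]
  refine Finset.sum_le_sum fun i _ => ?_
  simpa [Matrix.mulVec, dotProduct] using
    Finset.sum_mul_sq_le_sq_mul_sq Finset.univ (fun j => A i j) v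

lemma spec_set_nonempty {m k : ℕ} (A : Matrix (Fin m) (Fin k) ℝ) :
    ((fun v => l2norm (A.mulVec v)) '' {v | l2norm v ≤ 1}).Nonempty :=
  ⟨l2norm (A.mulVec 0), ⟨0, by simp [l2norm_zero], rfl⟩⟩

lemma spec_set_bdd {m k : ℕ} (A : Matrix (Fin m) (Fin k) ℝ) :
    BddAbove ((fun v => l2norm (A.mulVec v)) '' {v | l2norm v ≤ 1}) := by
  refine ⟨frobNorm A, fun y hy => ?_⟩
  obtain ⟨v, hv, rfl⟩ := hy
  calc l2norm (A.mulVec v) ≤ frobNorm A * l2norm v := frob_bound A v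
    _ ≤ frobNorm A * 1 := mul_le_mul_of_nonneg_left hv (frobNorm_nonneg A)
    _ = frobNorm A := mul_one _

lemma specNorm_le {m k : ℕ} {A : Matrix (Fin m) (Fin k) ℝ} {c : ℝ}
    (h : ∀ v : Fin k → ℝ, l2norm v ≤ 1 → l2norm (A.mulVec v) ≤ c) : specNorm A ≤ c := by
  refine csSup_le (spec_set_nonempty A) ?_
  rintro y ⟨v, hv, rfl⟩; exact h v hv

lemma specNorm_nonneg {m k : ℕ} (A : Matrix (Fin m) (Fin k) ℝ) : 0 ≤ specNorm A := by
  have hmem : (0 : ℝ) ∈ (fun v => l2norm (A.mulVec v)) '' {v | l2norm v ≤ 1} :=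
    ⟨0, by simp [l2norm_zero], by simp [Matrix.mulVec_zero, l2norm_zero]⟩
  exact le_csSup (spec_set_bdd A) hmem

lemma mulVec_le {m k : ℕ} (A : Matrix (Fin m) (Fin k) ℝ) (v : Fin k → ℝ) :
    l2norm (A.mulVec v) ≤ specNorm A * l2norm v := by
  rcases eq_or_ne (l2norm v) 0 with h0 | h0
  · rw [l2norm_eq_zero h0]
    simp [Matrix.mulVec_zero, l2norm_zero]
  · have hpos : 0 < l2norm v := lt_of_le_of_ne (l2norm_nonneg v) (Ne.symm h0)
    set t := l2norm v with ht
    have hu : l2norm (t⁻¹ • v) = 1 := by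
      rw [l2norm_smul, abs_of_pos (inv_pos.mpr hpos)]
      field_simp
      exact ht.symm
    have hmem : l2norm (A.mulVec (t⁻¹ • v)) ∈
        (fun v => l2norm (A.mulVec v)) '' {v | l2norm v ≤ 1} :=
      ⟨t⁻¹ • v, le_of_eq hu, rfl⟩
    have hle : l2norm (A.mulVec (t⁻¹ • v)) ≤ specNorm A := le_csSup (spec_set_bdd A) hmem
    rw [Matrix.mulVec_smul, l2norm_smul, abs_of_pos (inv_pos.mpr hpos)] at hle
    calc l2norm (A.mulVec v) = t * (t⁻¹ * l2norm (A.mulVec v)) := by field_simp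
      _ ≤ t * specNorm A := mul_le_mul_of_nonneg_left hle hpos.le
      _ = specNorm A * t := mul_comm _ _

lemma specNorm_transpose_le {m k : ℕ} (A : Matrix (Fin m) (Fin k) ℝ) :
    specNorm A.transpose ≤ specNorm A := by
  refine specNorm_le fun v hv => ?_
  set u := A.transpose.mulVec v with hu
  have hvA : Matrix.vecMul v A = u := by rw [hu, Matrix.mulVec_transpose]
  have hdot : dotProduct v (A.mulVec u) = dotProduct u u := by
    rw [Matrix.dotProduct_mulVec, hvA]
  have hsq : l2norm u ^ 2 = dotProduct u u := by
    rw [l2norm_sq]; simp [dotProduct, pow_two]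
  have h1 : l2norm u ^ 2 ≤ specNorm A * l2norm u := by
    rw [hsq, ← hdot]
    calc dotProduct v (A.mulVec u)
        ≤ l2norm v * l2norm (A.mulVec u) := dot_le _ _
      _ ≤ 1 * (specNorm A * l2norm u) :=
          mul_le_mul hv (mulVec_le A u) (l2norm_nonneg _) zero_le_one
      _ = specNorm A * l2norm u := one_mul _
  nlinarith [l2norm_nonneg u, specNorm_nonneg A]

lemma diag_bound {k : ℕ} (f : Fin k → ℝ) (C : ℝ) (hC : 0 ≤ C) (hf : ∀ i, |f i| ≤ C)
    (v : Fin k → ℝ) : l2norm ((Matrix.diagonal f).mulVec v) ≤ C * l2norm v := by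
  refine sq_le_imp (l2norm_nonneg _) (mul_nonneg hC (l2norm_nonneg _)) ?_
  rw [l2norm_sq, mul_pow, l2norm_sq, Finset.mul_sum]
  refine Finset.sum_le_sum fun i _ => ?_
  rw [Matrix.mulVec_diagonal, mul_pow]
  have hfi : f i ^ 2 ≤ C ^ 2 := by
    have h1 := neg_le_of_abs_le (hf i)
    have h2 := le_of_abs_le (hf i)
    nlinarith
  exact mul_le_mul_of_nonneg_right hfi (sq_nonneg _)

end ResNetAux

open ResNetAux
/-- **ResNet input–output Jacobian bound.** Under the spectral bounds on the parameters and
|φ'| ≤ C_φ, the input–output Jacobian satisfies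
‖∂f/∂x‖ ≤ 2σ_w(1 + 2√(n/d))(1 + 9αC_φσ_vσ_w)^L. -/
theorem resnet_io_jacobian_bound
    (n L d : ℕ) (hn : 1 ≤ n) (hL : 1 ≤ L) (hd : 1 ≤ d)
    (α σv σw Cφ : ℝ) (hα : 0 < α) (hσv : 0 < σv) (hσw : 0 < σw) (hCφ : 0 < Cφ)
    (φ : ℝ → ℝ) (hφd : Differentiable ℝ φ) (hφ' : ∀ z : ℝ, |deriv φ z| ≤ Cφ)
    (B : ℝ) (x : Fin d → ℝ) (hx : l2norm x ≤ B)
    (θ : Params n L d) (hθ : SpectralBounds θ) :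
    l2norm (ioJacResNet φ α σv σw θ x) ≤
      2 * σw * (1 + 2 * Real.sqrt ((n : ℝ) / d)) * (1 + 9 * α * Cφ * σv * σw) ^ L := by
  obtain ⟨hw, hU, hWV⟩ := hθ
  have hn0 : (0:ℝ) < (n:ℝ) := by exact_mod_cast hn
  have hd0 : (0:ℝ) < (d:ℝ) := by exact_mod_cast hd
  have hsn : (0:ℝ) < Real.sqrt n := Real.sqrt_pos.mpr hn0
  have hsd : (0:ℝ) < Real.sqrt d := Real.sqrt_pos.mpr hd0
  have hnn : Real.sqrt n * Real.sqrt n = (n:ℝ) := Real.mul_self_sqrt (Nat.cast_nonneg n)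
  set K := 1 + 9 * α * Cφ * σv * σw with hK
  have hK0 : (0:ℝ) < K := by rw [hK]; positivity
  -- layer Jacobian bound
  have hlayer : ∀ ℓ : ℕ, 1 ≤ ℓ → ℓ ≤ L → specNorm (layerJac φ α σv σw θ x ℓ) ≤ K := by
    intro ℓ h1 h2
    obtain ⟨hWl, hVl⟩ := hWV ℓ h1 h2
    refine specNorm_le fun v hv => ?_
    rw [layerJac, Matrix.add_mulVec, Matrix.one_mulVec, Matrix.smul_mulVec]
    refine (l2norm_add_le _ _).trans ?_
    rw [l2norm_smul, abs_of_pos (show (0:ℝ) < α * σv * σw / (n:ℝ) by positivity)]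
    set D := Matrix.diagonal (fun i => deriv φ (gvec φ α σv σw θ x ℓ i)) with hD
    have s1 : l2norm ((Wmat θ ℓ).mulVec v) ≤ 3 * Real.sqrt n * 1 :=
      (mulVec_le _ _).trans (mul_le_mul hWl hv (l2norm_nonneg _) (by positivity))
    have s2 : l2norm (D.mulVec ((Wmat θ ℓ).mulVec v)) ≤ Cφ * (3 * Real.sqrt n * 1) := by
      refine (diag_bound _ Cφ hCφ.le (fun i => hφ' _) _).trans ?_
      exact mul_le_mul_of_nonneg_left s1 hCφ.le
    have s3 : l2norm ((Vmat θ ℓ * D * Wmat θ ℓ).mulVec v) ≤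
        3 * Real.sqrt n * (Cφ * (3 * Real.sqrt n * 1)) := by
      rw [← Matrix.mulVec_mulVec, ← Matrix.mulVec_mulVec]
      refine (mulVec_le _ _).trans ?_
      exact mul_le_mul hVl s2 (l2norm_nonneg _)
        (by positivity)
    calc l2norm v + α * σv * σw / (n:ℝ) *
          l2norm ((Vmat θ ℓ * D * Wmat θ ℓ).mulVec v)
        ≤ 1 + α * σv * σw / (n:ℝ) * (3 * Real.sqrt n * (Cφ * (3 * Real.sqrt n * 1))) :=
          add_le_add hv (mul_le_mul_of_nonneg_left s3 (by positivity))
      _ = K := by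
          have h9 : 3 * Real.sqrt n * (Cφ * (3 * Real.sqrt n * 1)) = 9 * Cφ * (n:ℝ) := by
            calc 3 * Real.sqrt n * (Cφ * (3 * Real.sqrt n * 1))
                = 9 * Cφ * (Real.sqrt n * Real.sqrt n) := by ring
              _ = 9 * Cφ * (n:ℝ) := by rw [hnn]
          have h10 : α * σv * σw / (n:ℝ) * (9 * Cφ * (n:ℝ)) = 9 * α * Cφ * σv * σw := by
            field_simp
          rw [h9, h10, hK]
  -- chain product bound
  have hchainB : ∀ m : ℕ, m ≤ L → specNorm (chainProd φ α σv σw θ x m) ≤ K ^ m := by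
    intro m
    induction m with
    | zero =>
        intro _
        refine specNorm_le fun v hv => ?_
        rw [show chainProd φ α σv σw θ x 0 = 1 from rfl, Matrix.one_mulVec]
        simpa using hv
    | succ m ih =>
        intro hmL
        have ihm := ih (Nat.le_of_succ_le hmL)
        refine specNorm_le fun v hv => ?_
        rw [show chainProd φ α σv σw θ x (m+1)
            = layerJac φ α σv σw θ x (m+1) * chainProd φ α σv σw θ x m from rfl,
          ← Matrix.mulVec_mulVec]
        have hcv : l2norm ((chainProd φ α σv σw θ x m).mulVec v) ≤ K ^ m * 1 :=
          (mulVec_le _ _).trans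
            (mul_le_mul ihm hv (l2norm_nonneg _) (le_trans (specNorm_nonneg _) ihm))
        calc l2norm ((layerJac φ α σv σw θ x (m+1)).mulVec
              ((chainProd φ α σv σw θ x m).mulVec v))
            ≤ K * (K ^ m * 1) := by
              refine (mulVec_le _ _).trans ?_
              exact mul_le_mul (hlayer (m+1) (Nat.succ_le_succ (Nat.zero_le m)) hmL) hcv
                (l2norm_nonneg _) hK0.le
          _ = K ^ (m+1) := by ring
  -- assemble
  have hy : l2norm ((chainProd φ α σv σw θ x L).transpose.mulVec (wOut θ)) ≤
      K ^ L * (2 * Real.sqrt n) := by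
    refine (mulVec_le _ _).trans ?_
    exact mul_le_mul ((specNorm_transpose_le _).trans (hchainB L le_rfl)) hw
      (l2norm_nonneg _) (pow_nonneg hK0.le L)
  have h2 : l2norm ((Umat θ).transpose.mulVec
        ((chainProd φ α σv σw θ x L).transpose.mulVec (wOut θ))) ≤
      (Real.sqrt d + 2 * Real.sqrt n) * (K ^ L * (2 * Real.sqrt n)) := by
    refine (mulVec_le _ _).trans ?_
    exact mul_le_mul ((specNorm_transpose_le _).trans hU) hy (l2norm_nonneg _)
      (by positivity)
  rw [ioJacResNet, l2norm_smul,
    abs_of_pos (show (0:ℝ) < σw / Real.sqrt n * (Real.sqrt d)⁻¹ by positivity)]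
  calc σw / Real.sqrt n * (Real.sqrt d)⁻¹ *
        l2norm ((Umat θ).transpose.mulVec
          ((chainProd φ α σv σw θ x L).transpose.mulVec (wOut θ)))
      ≤ σw / Real.sqrt n * (Real.sqrt d)⁻¹ *
        ((Real.sqrt d + 2 * Real.sqrt n) * (K ^ L * (2 * Real.sqrt n))) :=
        mul_le_mul_of_nonneg_left h2 (by positivity)
    _ = 2 * σw * (1 + 2 * Real.sqrt ((n : ℝ) / d)) * K ^ L := by
        rw [Real.sqrt_div (Nat.cast_nonneg n) (d:ℝ)]
        field_simp

end
end

section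
/- Forward activation norm bound. Consider the ResNet with input ‖x‖₂ ≤ B, activation satisfying |φ(z)| ≤ C_φ|z| for all z, and parameters satisfying ‖U‖ ≤ 3√n and ‖W^{(ℓ)}‖ ≤ 3√n, ‖V^{(ℓ)}‖ ≤ 3√n for all ℓ = 1,…,L. Then for every ℓ ∈ {0,1,…,L}: (1/√n)·‖x^{(ℓ)}‖₂ ≤ (1 + 9α·C_φ·σ_v·σ_w)^ℓ · (3B/√d). In particular (1/√n)·‖x^{(ℓ)}‖₂ ≤ K₁ := (1 + 9α·C_φ·σ_v·σ_w)^L · (3B/√d) for all ℓ. -/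
open MeasureTheory ProbabilityTheory Filter

noncomputable section

lemma l2norm_nonneg' {k : ℕ} (v : Fin k → ℝ) : 0 ≤ l2norm v := Real.sqrt_nonneg _

lemma l2norm_eq' {k : ℕ} (v : Fin k → ℝ) :
    l2norm v = ‖(WithLp.equiv 2 (Fin k → ℝ)).symm v‖ := by
  rw [EuclideanSpace.norm_eq]
  simp [l2norm, sq_abs]

lemma l2norm_add_le' {k : ℕ} (v w : Fin k → ℝ) :
    l2norm (v + w) ≤ l2norm v + l2norm w := by
  rw [l2norm_eq', l2norm_eq', l2norm_eq']
  exact norm_add_le _ _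

lemma l2norm_smul' {k : ℕ} (a : ℝ) (v : Fin k → ℝ) :
    l2norm (a • v) = |a| * l2norm v := by
  unfold l2norm
  rw [← Real.sqrt_sq_eq_abs, ← Real.sqrt_mul (sq_nonneg a)]
  congr 1
  rw [Finset.mul_sum]
  simp [mul_pow]

lemma l2norm_eq_zero' {k : ℕ} {v : Fin k → ℝ} (h : l2norm v = 0) : v = 0 := by
  rw [l2norm_eq', norm_eq_zero] at h
  exact congrArg (WithLp.equiv 2 (Fin k → ℝ)) h

lemma frobNorm_nonneg' {m k : ℕ} (A : Matrix (Fin m) (Fin k) ℝ) : 0 ≤ frobNorm A :=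
  Real.sqrt_nonneg _

lemma l2norm_mulVec_le_frob {m k : ℕ} (A : Matrix (Fin m) (Fin k) ℝ) (v : Fin k → ℝ) :
    l2norm (A.mulVec v) ≤ frobNorm A * l2norm v := by
  unfold l2norm frobNorm
  rw [← Real.sqrt_mul (by positivity)]
  apply Real.sqrt_le_sqrt
  rw [Finset.sum_mul]
  apply Finset.sum_le_sum
  intro i _
  exact Finset.sum_mul_sq_le_sq_mul_sq Finset.univ (A i) v

lemma l2norm_mulVec_le_spec {m k : ℕ} (A : Matrix (Fin m) (Fin k) ℝ) (v : Fin k → ℝ) :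
    l2norm (A.mulVec v) ≤ specNorm A * l2norm v := by
  have hbdd : BddAbove ((fun v => l2norm (A.mulVec v)) '' {v | l2norm v ≤ 1}) := by
    refine ⟨frobNorm A, ?_⟩
    rintro _ ⟨u, hu, rfl⟩
    calc l2norm (A.mulVec u) ≤ frobNorm A * l2norm u := l2norm_mulVec_le_frob A u
      _ ≤ frobNorm A * 1 := mul_le_mul_of_nonneg_left hu (frobNorm_nonneg' A)
      _ = frobNorm A := mul_one _
  rcases eq_or_lt_of_le (l2norm_nonneg' v) with h | h
  · have hv : v = 0 := l2norm_eq_zero' h.symm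
    subst hv
    simp only [Matrix.mulVec_zero, ← h, mul_zero]
    simp [l2norm]
  · have hmem : l2norm (A.mulVec ((l2norm v)⁻¹ • v)) ∈
        ((fun v => l2norm (A.mulVec v)) '' {v | l2norm v ≤ 1}) := by
      refine ⟨(l2norm v)⁻¹ • v, ?_, rfl⟩
      simp only [Set.mem_setOf_eq, l2norm_smul', abs_of_nonneg (inv_nonneg.mpr h.le)]
      rw [inv_mul_cancel₀ h.ne']
    have key := le_csSup hbdd hmem
    rw [Matrix.mulVec_smul, l2norm_smul', abs_of_nonneg (inv_nonneg.mpr h.le)] at key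
    rw [inv_mul_le_iff₀ h] at key
    exact key.trans_eq (mul_comm _ _)

lemma l2norm_phi_le {k : ℕ} (φ : ℝ → ℝ) (Cφ : ℝ) (hCφ : 0 ≤ Cφ)
    (hφ : ∀ z, |φ z| ≤ Cφ * |z|) (g : Fin k → ℝ) :
    l2norm (fun i => φ (g i)) ≤ Cφ * l2norm g := by
  unfold l2norm
  have h2 : Cφ * Real.sqrt (∑ i, g i ^ 2) = Real.sqrt (Cφ ^ 2 * ∑ i, g i ^ 2) := by
    rw [Real.sqrt_mul (sq_nonneg Cφ), Real.sqrt_sq hCφ]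
  rw [h2]
  show Real.sqrt (∑ i, φ (g i) ^ 2) ≤ _
  apply Real.sqrt_le_sqrt
  rw [Finset.mul_sum]
  apply Finset.sum_le_sum
  intro i _
  calc φ (g i) ^ 2 = |φ (g i)| ^ 2 := (sq_abs _).symm
    _ ≤ (Cφ * |g i|) ^ 2 := by
        apply pow_le_pow_left₀ (abs_nonneg _) (hφ _)
    _ = Cφ ^ 2 * g i ^ 2 := by rw [mul_pow, sq_abs]

/-- **Forward activation norm bound.** If ‖x‖₂ ≤ B, |φ(z)| ≤ C_φ|z|, ‖U‖ ≤ 3√n and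
‖W^{(ℓ)}‖, ‖V^{(ℓ)}‖ ≤ 3√n for all ℓ, then for every ℓ ∈ {0,…,L}:
(1/√n)‖x^{(ℓ)}‖₂ ≤ (1 + 9αC_φσ_vσ_w)^ℓ·(3B/√d); in particular it is ≤ K₁ for all ℓ. -/
theorem forward_activation_norm_bound
    (n L d : ℕ) (hn : 1 ≤ n) (hL : 1 ≤ L) (hd : 1 ≤ d)
    (α σv σw Cφ : ℝ) (hα : 0 < α) (hσv : 0 < σv) (hσw : 0 < σw) (hCφ : 0 < Cφ)
    (φ : ℝ → ℝ) (hφ : ∀ z : ℝ, |φ z| ≤ Cφ * |z|)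
    (B : ℝ) (x : Fin d → ℝ) (hx : l2norm x ≤ B)
    (θ : Params n L d)
    (hU : specNorm (Umat θ) ≤ 3 * Real.sqrt n)
    (hWV : ∀ ℓ : ℕ, 1 ≤ ℓ → ℓ ≤ L →
      specNorm (Wmat θ ℓ) ≤ 3 * Real.sqrt n ∧ specNorm (Vmat θ ℓ) ≤ 3 * Real.sqrt n) :
    (∀ ℓ : ℕ, ℓ ≤ L →
      (Real.sqrt n)⁻¹ * l2norm (xvec φ α σv σw θ x ℓ) ≤
        (1 + 9 * α * Cφ * σv * σw) ^ ℓ * (3 * B / Real.sqrt d)) ∧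
    (∀ ℓ : ℕ, ℓ ≤ L →
      (Real.sqrt n)⁻¹ * l2norm (xvec φ α σv σw θ x ℓ) ≤
        (1 + 9 * α * Cφ * σv * σw) ^ L * (3 * B / Real.sqrt d)) := by
  have hsn : (0:ℝ) < Real.sqrt n := Real.sqrt_pos.mpr (by exact_mod_cast hn)
  have hsd : (0:ℝ) < Real.sqrt d := Real.sqrt_pos.mpr (by exact_mod_cast hd)
  have hB : 0 ≤ B := le_trans (l2norm_nonneg' x) hx
  set r : ℝ := 1 + 9 * α * Cφ * σv * σw with hr
  have hr1 : 1 ≤ r := by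
    have : 0 < 9 * α * Cφ * σv * σw := by positivity
    linarith
  have hr0 : 0 ≤ r := by linarith
  have main : ∀ ℓ : ℕ, ℓ ≤ L →
      (Real.sqrt n)⁻¹ * l2norm (xvec φ α σv σw θ x ℓ) ≤
        r ^ ℓ * (3 * B / Real.sqrt d) := by
    intro ℓ
    induction ℓ with
    | zero =>
      intro _
      simp only [xvec, pow_zero, one_mul]
      rw [l2norm_smul', abs_of_nonneg (inv_nonneg.mpr hsd.le)]
      have h1 : l2norm ((Umat θ).mulVec x) ≤ 3 * Real.sqrt n * B := by
        calc l2norm ((Umat θ).mulVec x) ≤ specNorm (Umat θ) * l2norm x :=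
              l2norm_mulVec_le_spec _ _
          _ ≤ 3 * Real.sqrt n * B := by
              apply mul_le_mul hU hx (l2norm_nonneg' x)
              positivity
      calc (Real.sqrt n)⁻¹ * ((Real.sqrt d)⁻¹ * l2norm ((Umat θ).mulVec x))
          ≤ (Real.sqrt n)⁻¹ * ((Real.sqrt d)⁻¹ * (3 * Real.sqrt n * B)) := by
            apply mul_le_mul_of_nonneg_left _ (inv_nonneg.mpr hsn.le)
            exact mul_le_mul_of_nonneg_left h1 (inv_nonneg.mpr hsd.le)
        _ = 3 * B / Real.sqrt d := by
            field_simp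
    | succ ℓ ih =>
      intro hℓ
      have ihℓ := ih (by omega)
      obtain ⟨hW, hV⟩ := hWV (ℓ + 1) (by omega) hℓ
      set a := l2norm (xvec φ α σv σw θ x ℓ) with ha
      have ha0 : 0 ≤ a := l2norm_nonneg' _
      -- bound the residual branch
      have hg : l2norm (fun i => φ ((σw / Real.sqrt n) *
          (Wmat θ (ℓ + 1)).mulVec (xvec φ α σv σw θ x ℓ) i)) ≤ 3 * Cφ * σw * a := by
        have := l2norm_phi_le φ Cφ hCφ.le hφ
          ((σw / Real.sqrt n) • (Wmat θ (ℓ + 1)).mulVec (xvec φ α σv σw θ x ℓ))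
        simp only [Pi.smul_apply, smul_eq_mul] at this
        refine le_trans this ?_
        rw [l2norm_smul', abs_of_nonneg (by positivity)]
        calc Cφ * (σw / Real.sqrt n *
              l2norm ((Wmat θ (ℓ + 1)).mulVec (xvec φ α σv σw θ x ℓ)))
            ≤ Cφ * (σw / Real.sqrt n * (3 * Real.sqrt n * a)) := by
              apply mul_le_mul_of_nonneg_left _ hCφ.le
              apply mul_le_mul_of_nonneg_left _ (by positivity)
              calc l2norm ((Wmat θ (ℓ + 1)).mulVec (xvec φ α σv σw θ x ℓ))
                  ≤ specNorm (Wmat θ (ℓ + 1)) * a := l2norm_mulVec_le_spec _ _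
                _ ≤ 3 * Real.sqrt n * a := mul_le_mul_of_nonneg_right hW ha0
          _ = 3 * Cφ * σw * a := by field_simp
      have hbranch : l2norm ((α * σv / Real.sqrt n) • (Vmat θ (ℓ + 1)).mulVec
          (fun i => φ ((σw / Real.sqrt n) *
            (Wmat θ (ℓ + 1)).mulVec (xvec φ α σv σw θ x ℓ) i))) ≤
          9 * α * Cφ * σv * σw * a := by
        rw [l2norm_smul', abs_of_nonneg (by positivity)]
        calc α * σv / Real.sqrt n * l2norm ((Vmat θ (ℓ + 1)).mulVec _)
            ≤ α * σv / Real.sqrt n * (3 * Real.sqrt n * (3 * Cφ * σw * a)) := by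
              apply mul_le_mul_of_nonneg_left _ (by positivity)
              calc l2norm ((Vmat θ (ℓ + 1)).mulVec _)
                  ≤ specNorm (Vmat θ (ℓ + 1)) * l2norm _ := l2norm_mulVec_le_spec _ _
                _ ≤ 3 * Real.sqrt n * (3 * Cφ * σw * a) := by
                    apply mul_le_mul hV hg (l2norm_nonneg' _) (by positivity)
          _ = 9 * α * Cφ * σv * σw * a := by field_simp; ring
      have hstep : l2norm (xvec φ α σv σw θ x (ℓ + 1)) ≤ r * a := by
        calc l2norm (xvec φ α σv σw θ x (ℓ + 1)) ≤ a + 9 * α * Cφ * σv * σw * a := by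
              refine le_trans (l2norm_add_le' _ _) ?_
              exact add_le_add_right hbranch a
          _ = r * a := by rw [hr]; ring
      calc (Real.sqrt n)⁻¹ * l2norm (xvec φ α σv σw θ x (ℓ + 1))
          ≤ (Real.sqrt n)⁻¹ * (r * a) :=
            mul_le_mul_of_nonneg_left hstep (inv_nonneg.mpr hsn.le)
        _ = r * ((Real.sqrt n)⁻¹ * a) := by ring
        _ ≤ r * (r ^ ℓ * (3 * B / Real.sqrt d)) :=
            mul_le_mul_of_nonneg_left ihℓ hr0
        _ = r ^ (ℓ + 1) * (3 * B / Real.sqrt d) := by ring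
  refine ⟨main, fun ℓ hℓ => ?_⟩
  refine le_trans (main ℓ hℓ) ?_
  apply mul_le_mul_of_nonneg_right (pow_le_pow_right₀ hr1 hℓ)
  positivity

end
end

section
/- Forward parameter-Lipschitz bound. Consider the ResNet with input ‖x‖₂ ≤ B and activation satisfying the stated regularity conditions. There exists a constant K depending only on L, α, σ_v, σ_w, C_φ, B, and d (and not on n) such that for all parameter vectors θ, θ̃ both satisfying the spectral bounds, and for every ℓ ∈ {0,1,…,L} (respectively ℓ ∈ {1,…,L}): ‖x^{(ℓ)}(x;θ) − x^{(ℓ)}(x;θ̃)‖₂ ≤ K·‖θ − θ̃‖₂ and ‖g^{(ℓ)}(x;θ) − g^{(ℓ)}(x;θ̃)‖₂ ≤ K·‖θ − θ̃‖₂, where ‖θ − θ̃‖₂ is the Euclidean norm of the difference of the full (vectorized) parameter vectors. -/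
open MeasureTheory ProbabilityTheory Filter

noncomputable section

namespace Helpers



lemma l2norm_eq_norm {k : ℕ} (v : Fin k → ℝ) :
    l2norm v = ‖(WithLp.toLp 2 v : EuclideanSpace ℝ (Fin k))‖ := by
  rw [EuclideanSpace.norm_eq]
  simp [l2norm, Real.norm_eq_abs, sq_abs]

lemma l2norm_nonneg {k : ℕ} (v : Fin k → ℝ) : 0 ≤ l2norm v := Real.sqrt_nonneg _

lemma l2norm_add_le {k : ℕ} (u v : Fin k → ℝ) : l2norm (u + v) ≤ l2norm u + l2norm v := by
  simpa [l2norm_eq_norm] using norm_add_le (E := EuclideanSpace ℝ (Fin k)) (WithLp.toLp 2 u) (WithLp.toLp 2 v)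

lemma l2norm_smul {k : ℕ} (c : ℝ) (v : Fin k → ℝ) : l2norm (c • v) = |c| * l2norm v := by
  simpa [l2norm_eq_norm, Real.norm_eq_abs] using
    norm_smul (α := ℝ) (β := EuclideanSpace ℝ (Fin k)) c (WithLp.toLp 2 v)

lemma l2norm_eq_zero {k : ℕ} {v : Fin k → ℝ} (h : l2norm v = 0) : v = 0 := by
  rw [l2norm_eq_norm] at h
  have h' := norm_eq_zero (E := EuclideanSpace ℝ (Fin k)) |>.mp h
  simpa using congrArg WithLp.ofLp h'

lemma frobNorm_nonneg {m k : ℕ} (A : Matrix (Fin m) (Fin k) ℝ) : 0 ≤ frobNorm A :=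
  Real.sqrt_nonneg _

lemma l2norm_mulVec_le_frob {m k : ℕ} (A : Matrix (Fin m) (Fin k) ℝ) (v : Fin k → ℝ) :
    l2norm (A.mulVec v) ≤ frobNorm A * l2norm v := by
  have h1 : ∀ i, (A.mulVec v i) ^ 2 ≤ (∑ j, (A i j) ^ 2) * ∑ j, (v j) ^ 2 := by
    intro i
    simpa [Matrix.mulVec, dotProduct] using Finset.sum_mul_sq_le_sq_mul_sq Finset.univ (A i) v
  have h2 : ∑ i, (A.mulVec v i) ^ 2 ≤ (∑ i, ∑ j, (A i j) ^ 2) * ∑ j, (v j) ^ 2 := by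
    rw [Finset.sum_mul]
    exact Finset.sum_le_sum fun i _ => h1 i
  calc l2norm (A.mulVec v) ≤ Real.sqrt ((∑ i, ∑ j, (A i j) ^ 2) * ∑ j, (v j) ^ 2) :=
        Real.sqrt_le_sqrt h2
    _ = frobNorm A * l2norm v := by rw [Real.sqrt_mul (by positivity)]; rfl

lemma specNorm_bddAbove {m k : ℕ} (A : Matrix (Fin m) (Fin k) ℝ) :
    BddAbove ((fun v => l2norm (A.mulVec v)) '' {v | l2norm v ≤ 1}) := by
  refine ⟨frobNorm A, ?_⟩
  rintro y ⟨v, hv, rfl⟩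
  calc l2norm (A.mulVec v) ≤ frobNorm A * l2norm v := l2norm_mulVec_le_frob A v
    _ ≤ frobNorm A * 1 := by
        exact mul_le_mul_of_nonneg_left hv (frobNorm_nonneg A)
    _ = frobNorm A := mul_one _

lemma specNorm_mulVec_le {m k : ℕ} (A : Matrix (Fin m) (Fin k) ℝ) (v : Fin k → ℝ) :
    l2norm (A.mulVec v) ≤ specNorm A * l2norm v := by
  rcases eq_or_lt_of_le (l2norm_nonneg v) with h0 | h0
  · have hv : v = 0 := l2norm_eq_zero h0.symm
    subst hv
    simp [Matrix.mulVec_zero, ← h0, l2norm]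
  · set t := l2norm v with ht
    have hu : l2norm (t⁻¹ • v) ≤ 1 := by
      rw [l2norm_smul, abs_of_pos (inv_pos.mpr h0)]
      rw [inv_mul_cancel₀ (ne_of_gt h0)]
    have hle : l2norm (A.mulVec (t⁻¹ • v)) ≤ specNorm A :=
      le_csSup (specNorm_bddAbove A) ⟨t⁻¹ • v, hu, rfl⟩
    have hAv : A.mulVec v = t • A.mulVec (t⁻¹ • v) := by
      rw [Matrix.mulVec_smul, smul_smul, mul_inv_cancel₀ (ne_of_gt h0), one_smul]
    rw [hAv, l2norm_smul, abs_of_pos h0]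
    calc t * l2norm (A.mulVec (t⁻¹ • v)) ≤ t * specNorm A :=
          mul_le_mul_of_nonneg_left hle (le_of_lt h0)
      _ = specNorm A * t := mul_comm _ _

lemma l2norm_le_of_abs_le {k : ℕ} {t : ℝ} (ht : 0 ≤ t) {u v : Fin k → ℝ}
    (h : ∀ i, |u i| ≤ t * |v i|) : l2norm u ≤ t * l2norm v := by
  have : ∑ i, (u i) ^ 2 ≤ t ^ 2 * ∑ i, (v i) ^ 2 := by
    rw [Finset.mul_sum]
    refine Finset.sum_le_sum fun i _ => ?_
    calc (u i) ^ 2 = |u i| ^ 2 := (sq_abs _).symm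
      _ ≤ (t * |v i|) ^ 2 := by
          exact pow_le_pow_left₀ (abs_nonneg _) (h i) 2
      _ = t ^ 2 * (v i) ^ 2 := by rw [mul_pow, sq_abs]
  calc l2norm u ≤ Real.sqrt (t ^ 2 * ∑ i, (v i) ^ 2) := Real.sqrt_le_sqrt this
    _ = t * l2norm v := by
        rw [Real.sqrt_mul (by positivity), Real.sqrt_sq ht]; rfl


lemma sum_comp_le {ι κ : Type*} [Fintype ι] [Fintype κ] [DecidableEq κ] (e : ι → κ)
    (he : Function.Injective e) (f : κ → ℝ) (hf : ∀ q, 0 ≤ f q) :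
    ∑ p, f (e p) ≤ ∑ q, f q := by
  rw [← Finset.sum_image (g := e) (f := f) (fun p _ q _ h => he h)]
  exact Finset.sum_le_sum_of_subset_of_nonneg (Finset.subset_univ _) (fun q _ _ => hf q)

lemma frob_le_paramNorm {n L d : ℕ} (θ : Params n L d) {m k : ℕ}
    (A : Matrix (Fin m) (Fin k) ℝ) (e : Fin m × Fin k → ParamIdx n L d)
    (he : Function.Injective e) (hA : ∀ i j, A i j = θ (e (i, j))) :
    frobNorm A ≤ paramNorm θ := by
  unfold frobNorm paramNorm
  apply Real.sqrt_le_sqrt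
  calc ∑ i, ∑ j, (A i j) ^ 2 = ∑ i, ∑ j, (θ (e (i, j))) ^ 2 := by
        simp_rw [hA]
    _ = ∑ p : Fin m × Fin k, (θ (e p)) ^ 2 :=
        (Fintype.sum_prod_type (f := fun p => (θ (e p)) ^ 2)).symm
    _ ≤ ∑ q, (θ q) ^ 2 := sum_comp_le e he _ (fun q => sq_nonneg _)

lemma frob_W_sub {n L d : ℕ} (θ θ' : Params n L d) {ℓ : ℕ} (h1 : 1 ≤ ℓ) (h2 : ℓ ≤ L) :
    frobNorm (Wmat θ ℓ - Wmat θ' ℓ) ≤ paramNorm (θ - θ') := by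
  refine frob_le_paramNorm (θ - θ') _
    (fun p => Sum.inr (Sum.inl (⟨ℓ - 1, by omega⟩, p.1, p.2))) ?_ ?_
  · intro p q h
    simp only [Sum.inr.injEq, Sum.inl.injEq, Prod.mk.injEq] at h
    exact Prod.ext h.2.1 h.2.2
  · intro i j
    simp [Wmat, h1, h2]

lemma frob_V_sub {n L d : ℕ} (θ θ' : Params n L d) {ℓ : ℕ} (h1 : 1 ≤ ℓ) (h2 : ℓ ≤ L) :
    frobNorm (Vmat θ ℓ - Vmat θ' ℓ) ≤ paramNorm (θ - θ') := by
  refine frob_le_paramNorm (θ - θ') _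
    (fun p => Sum.inr (Sum.inr (Sum.inl (⟨ℓ - 1, by omega⟩, p.1, p.2)))) ?_ ?_
  · intro p q h
    simp only [Sum.inr.injEq, Sum.inl.injEq, Prod.mk.injEq] at h
    exact Prod.ext h.2.1 h.2.2
  · intro i j
    simp [Vmat, h1, h2]

lemma frob_U_sub {n L d : ℕ} (θ θ' : Params n L d) :
    frobNorm (Umat θ - Umat θ') ≤ paramNorm (θ - θ') := by
  refine frob_le_paramNorm (θ - θ') _
    (fun p => Sum.inr (Sum.inr (Sum.inr (p.1, p.2)))) ?_ ?_
  · intro p q h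
    simp only [Sum.inr.injEq, Prod.mk.injEq] at h
    exact Prod.ext h.1 h.2
  · intro i j
    simp [Umat]

lemma paramNorm_nonneg {n L d : ℕ} (θ : Params n L d) : 0 ≤ paramNorm θ :=
  Real.sqrt_nonneg _

end Helpers

set_option maxHeartbeats 4000000 in
/-- **Forward parameter-Lipschitz bound.** There is a constant K depending only on
L, α, σ_v, σ_w, C_φ, B and d (not on n) such that for all parameter vectors θ, θ̃
satisfying the spectral bounds: ‖x^{(ℓ)}(θ) − x^{(ℓ)}(θ̃)‖₂ ≤ K‖θ − θ̃‖₂ for ℓ = 0,…,L and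
‖g^{(ℓ)}(θ) − g^{(ℓ)}(θ̃)‖₂ ≤ K‖θ − θ̃‖₂ for ℓ = 1,…,L. -/
theorem forward_parameter_lipschitz
    (L d : ℕ) (hL : 1 ≤ L) (hd : 1 ≤ d)
    (α σv σw Cφ B : ℝ) (hα : 0 < α) (hσv : 0 < σv) (hσw : 0 < σw) (hCφ : 0 < Cφ)
    (hB : 0 ≤ B) :
    ∃ K : ℝ, 0 < K ∧
      ∀ (n : ℕ) (φ : ℝ → ℝ), Differentiable ℝ φ →
        (∀ z : ℝ, |φ z| ≤ Cφ * |z|) → (∀ z : ℝ, |deriv φ z| ≤ Cφ) →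
        (∀ z z' : ℝ, |φ z - φ z'| ≤ Cφ * |z - z'|) →
        (∀ z z' : ℝ, |deriv φ z - deriv φ z'| ≤ Cφ * |z - z'|) →
        ∀ x : Fin d → ℝ, l2norm x ≤ B →
        ∀ θ θ' : Params n L d, SpectralBounds θ → SpectralBounds θ' →
          (∀ ℓ : ℕ, ℓ ≤ L →
            l2norm (xvec φ α σv σw θ x ℓ - xvec φ α σv σw θ' x ℓ) ≤
              K * paramNorm (θ - θ')) ∧
          (∀ ℓ : ℕ, 1 ≤ ℓ → ℓ ≤ L →
            l2norm (gvec φ α σv σw θ x ℓ - gvec φ α σv σw θ' x ℓ) ≤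
              K * paramNorm (θ - θ')) := by
  classical
  -- constants (introduced opaquely)
  obtain ⟨c, hc_def⟩ : ∃ c : ℝ, c = 1 + 9 * α * σv * σw * Cφ := ⟨_, rfl⟩
  have hprod : 0 < α * σv * σw * Cφ := by positivity
  have hc1 : 1 ≤ c := by rw [hc_def]; nlinarith
  have hc0 : 0 < c := lt_of_lt_of_le one_pos hc1
  obtain ⟨E, hE_def⟩ : ∃ E : ℝ, E = 18 * α * σv * σw * Cφ * B * c ^ L := ⟨_, rfl⟩
  have hE0 : 0 ≤ E := by rw [hE_def]; positivity
  obtain ⟨Kx, hKx_def⟩ : ∃ K : ℝ, K = c ^ L * B + L * (c ^ L * E) := ⟨_, rfl⟩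
  have hKx0 : 0 ≤ Kx := by rw [hKx_def]; positivity
  obtain ⟨Kg, hKg_def⟩ : ∃ K : ℝ, K = σw * (3 * B * c ^ L) + 3 * σw * Kx := ⟨_, rfl⟩
  have hKg0 : 0 ≤ Kg := by rw [hKg_def]; positivity
  refine ⟨Kx + Kg + 1, by positivity, ?_⟩
  intro n φ hdiffφ hφ1 hφd hφlip hφdlip x hx θ θ' hθ hθ'
  obtain ⟨P, hPdef⟩ : ∃ P : ℝ, P = paramNorm (θ - θ') := ⟨_, rfl⟩
  have hP0 : 0 ≤ P := hPdef ▸ Helpers.paramNorm_nonneg _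
  rw [← hPdef]
  by_cases hn : n = 0
  · subst hn
    constructor
    · intro ℓ _
      have hz : l2norm (xvec φ α σv σw θ x ℓ - xvec φ α σv σw θ' x ℓ) = 0 := by
        simp [l2norm]
      rw [hz]; positivity
    · intro ℓ _ _
      have hz : l2norm (gvec φ α σv σw θ x ℓ - gvec φ α σv σw θ' x ℓ) = 0 := by
        simp [l2norm]
      rw [hz]; positivity
  · have hn1 : 1 ≤ n := Nat.one_le_iff_ne_zero.mpr hn
    obtain ⟨sn, hsn_def⟩ : ∃ s : ℝ, s = Real.sqrt n := ⟨_, rfl⟩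
    have hsn1 : 1 ≤ sn := by
      rw [hsn_def, show (1 : ℝ) = Real.sqrt 1 by simp]
      exact Real.sqrt_le_sqrt (by exact_mod_cast hn1)
    have hsn0 : 0 < sn := lt_of_lt_of_le one_pos hsn1
    obtain ⟨sd, hsd_def⟩ : ∃ s : ℝ, s = Real.sqrt d := ⟨_, rfl⟩
    have hsd1 : 1 ≤ sd := by
      rw [hsd_def, show (1 : ℝ) = Real.sqrt 1 by simp]
      exact Real.sqrt_le_sqrt (by exact_mod_cast hd)
    have hsd0 : 0 < sd := lt_of_lt_of_le one_pos hsd1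
    have hsdinv : sd⁻¹ ≤ 1 := by
      nlinarith [mul_inv_cancel₀ (ne_of_gt hsd0), inv_nonneg.mpr (le_of_lt hsd0)]
    have hB0 : 0 ≤ B := hB
    -- a priori bound on layer norms
    have hxb : ∀ (ψ : Params n L d), SpectralBounds ψ → ∀ ℓ, ℓ ≤ L →
        l2norm (xvec φ α σv σw ψ x ℓ) ≤ 3 * B * c ^ ℓ * sn := by
      intro ψ hψ ℓ
      induction ℓ with
      | zero =>
        intro _
        have h1 : l2norm (xvec φ α σv σw ψ x 0) =
            |(Real.sqrt d)⁻¹| * l2norm ((Umat ψ).mulVec x) := by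
          simp only [xvec]
          exact Helpers.l2norm_smul _ _
        rw [h1, ← hsd_def, abs_of_nonneg (inv_nonneg.mpr (le_of_lt hsd0))]
        have h2 : l2norm ((Umat ψ).mulVec x) ≤ (sd + 2 * sn) * B := by
          calc l2norm ((Umat ψ).mulVec x) ≤ specNorm (Umat ψ) * l2norm x :=
                Helpers.specNorm_mulVec_le _ _
            _ ≤ (sd + 2 * sn) * B := by
                apply mul_le_mul ?_ hx (Helpers.l2norm_nonneg _) (by positivity)
                rw [hsd_def, hsn_def]; exact hψ.2.1
        calc sd⁻¹ * l2norm ((Umat ψ).mulVec x) ≤ sd⁻¹ * ((sd + 2 * sn) * B) := by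
              apply mul_le_mul_of_nonneg_left h2 (inv_nonneg.mpr (le_of_lt hsd0))
          _ = B + sd⁻¹ * (2 * sn * B) := by field_simp
          _ ≤ B + 1 * (2 * sn * B) := by
              have : sd⁻¹ * (2 * sn * B) ≤ 1 * (2 * sn * B) :=
                mul_le_mul_of_nonneg_right hsdinv (by positivity)
              linarith
          _ ≤ 3 * B * c ^ 0 * sn := by
              rw [pow_zero]
              nlinarith [mul_le_mul_of_nonneg_left hsn1 hB0]
      | succ ℓ ih =>
        intro hℓ1
        have hℓL : ℓ ≤ L := le_trans (Nat.le_succ ℓ) hℓ1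
        have ihv := ih hℓL
        obtain ⟨hw, hu, hWV⟩ := hψ
        obtain ⟨hW, hV⟩ := hWV (ℓ + 1) (Nat.succ_le_succ (Nat.zero_le ℓ)) hℓ1
        obtain ⟨a, ha_def⟩ : ∃ a : ℝ, a = 3 * B * c ^ ℓ * sn := ⟨_, rfl⟩
        have ha0 : 0 ≤ a := by rw [ha_def]; positivity
        have ihv' : l2norm (xvec φ α σv σw ψ x ℓ) ≤ a := ha_def ▸ ihv
        have hφg : l2norm (fun i => φ ((σw / Real.sqrt n) *
            (Wmat ψ (ℓ + 1)).mulVec (xvec φ α σv σw ψ x ℓ) i)) ≤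
            Cφ * ((σw / sn) * (3 * sn * a)) := by
          have h1 : l2norm (fun i => φ ((σw / Real.sqrt n) *
              (Wmat ψ (ℓ + 1)).mulVec (xvec φ α σv σw ψ x ℓ) i)) ≤
              Cφ * l2norm ((σw / Real.sqrt n) •
                (Wmat ψ (ℓ + 1)).mulVec (xvec φ α σv σw ψ x ℓ)) := by
            apply Helpers.l2norm_le_of_abs_le (le_of_lt hCφ)
            intro i
            exact hφ1 _
          refine le_trans h1 ?_
          apply mul_le_mul_of_nonneg_left ?_ (le_of_lt hCφ)
          rw [Helpers.l2norm_smul, ← hsn_def,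
            abs_of_nonneg (by positivity : (0:ℝ) ≤ σw / sn)]
          apply mul_le_mul_of_nonneg_left ?_ (by positivity : (0:ℝ) ≤ σw / sn)
          calc l2norm ((Wmat ψ (ℓ + 1)).mulVec (xvec φ α σv σw ψ x ℓ)) ≤
                specNorm (Wmat ψ (ℓ + 1)) * l2norm (xvec φ α σv σw ψ x ℓ) :=
                Helpers.specNorm_mulVec_le _ _
            _ ≤ 3 * sn * a := by
                apply mul_le_mul ?_ ihv' (Helpers.l2norm_nonneg _) (by positivity)
                rw [hsn_def]; exact hW
        rw [← hsn_def] at hφg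
        have hstep : l2norm (xvec φ α σv σw ψ x (ℓ + 1)) ≤
            a + (α * σv / sn) * (3 * sn * (Cφ * ((σw / sn) * (3 * sn * a)))) := by
          have hun : xvec φ α σv σw ψ x (ℓ + 1) =
              xvec φ α σv σw ψ x ℓ + (α * σv / Real.sqrt n) •
                (Vmat ψ (ℓ + 1)).mulVec (fun i => φ ((σw / Real.sqrt n) *
                  (Wmat ψ (ℓ + 1)).mulVec (xvec φ α σv σw ψ x ℓ) i)) := by
            simp only [xvec]
          rw [hun]
          refine le_trans (Helpers.l2norm_add_le _ _) ?_
          apply add_le_add ihv'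
          rw [Helpers.l2norm_smul, ← hsn_def,
            abs_of_nonneg (by positivity : (0:ℝ) ≤ α * σv / sn)]
          apply mul_le_mul_of_nonneg_left ?_ (by positivity : (0:ℝ) ≤ α * σv / sn)
          calc l2norm ((Vmat ψ (ℓ + 1)).mulVec _) ≤
                specNorm (Vmat ψ (ℓ + 1)) * l2norm _ := Helpers.specNorm_mulVec_le _ _
            _ ≤ 3 * sn * (Cφ * ((σw / sn) * (3 * sn * a))) := by
                apply mul_le_mul ?_ hφg (Helpers.l2norm_nonneg _) (by positivity)
                rw [hsn_def]; exact hV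
        refine le_trans hstep ?_
        have heq : a + (α * σv / sn) * (3 * sn * (Cφ * ((σw / sn) * (3 * sn * a)))) =
            c * a := by
          rw [hc_def]
          field_simp
          ring
        rw [heq, ha_def]
        have h2 : c * (3 * B * c ^ ℓ * sn) = 3 * B * c ^ (ℓ + 1) * sn := by ring
        rw [h2]
    -- layer Lipschitz bound
    have hD : ∀ ℓ, ℓ ≤ L →
        l2norm (xvec φ α σv σw θ x ℓ - xvec φ α σv σw θ' x ℓ) ≤
          (c ^ ℓ * B + ℓ * (c ^ ℓ * E)) * P := by
      intro ℓ
      induction ℓ with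
      | zero =>
        intro _
        have hid : xvec φ α σv σw θ x 0 - xvec φ α σv σw θ' x 0 =
            (Real.sqrt d)⁻¹ • ((Umat θ - Umat θ').mulVec x) := by
          simp only [xvec]
          rw [Matrix.sub_mulVec, smul_sub]
        rw [hid, Helpers.l2norm_smul, ← hsd_def,
          abs_of_nonneg (inv_nonneg.mpr (le_of_lt hsd0))]
        have h2 : l2norm ((Umat θ - Umat θ').mulVec x) ≤ P * B := by
          calc l2norm ((Umat θ - Umat θ').mulVec x) ≤
                frobNorm (Umat θ - Umat θ') * l2norm x := Helpers.l2norm_mulVec_le_frob _ _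
            _ ≤ P * B := by
                apply mul_le_mul ?_ hx (Helpers.l2norm_nonneg _) hP0
                rw [hPdef]; exact Helpers.frob_U_sub θ θ'
        calc sd⁻¹ * l2norm ((Umat θ - Umat θ').mulVec x) ≤ 1 * (P * B) := by
              apply mul_le_mul hsdinv h2 (Helpers.l2norm_nonneg _) zero_le_one
          _ = (c ^ 0 * B + (0:ℕ) * (c ^ 0 * E)) * P := by push_cast; ring
      | succ ℓ ih =>
        intro hℓ1
        have hℓL : ℓ ≤ L := le_trans (Nat.le_succ ℓ) hℓ1
        obtain ⟨hW, hV⟩ := hθ.2.2 (ℓ + 1) (Nat.succ_le_succ (Nat.zero_le ℓ)) hℓ1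
        obtain ⟨hW', hV'⟩ := hθ'.2.2 (ℓ + 1) (Nat.succ_le_succ (Nat.zero_le ℓ)) hℓ1
        obtain ⟨a, ha_def⟩ : ∃ a : ℝ, a = 3 * B * c ^ ℓ * sn := ⟨_, rfl⟩
        have ha0 : 0 ≤ a := by rw [ha_def]; positivity
        have hxa : l2norm (xvec φ α σv σw θ x ℓ) ≤ a := ha_def ▸ hxb θ hθ ℓ hℓL
        obtain ⟨Dl, hDl_def⟩ : ∃ D : ℝ, D = c ^ ℓ * B + ℓ * (c ^ ℓ * E) := ⟨_, rfl⟩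
        have hDl0 : 0 ≤ Dl := by rw [hDl_def]; positivity
        have ihv : l2norm (xvec φ α σv σw θ x ℓ - xvec φ α σv σw θ' x ℓ) ≤ Dl * P :=
          hDl_def ▸ ih hℓL
        -- bound on φ of preactivation for θ
        have hφg : l2norm (fun i => φ ((σw / Real.sqrt n) *
            (Wmat θ (ℓ + 1)).mulVec (xvec φ α σv σw θ x ℓ) i)) ≤
            Cφ * ((σw / sn) * (3 * sn * a)) := by
          have h1 : l2norm (fun i => φ ((σw / Real.sqrt n) *
              (Wmat θ (ℓ + 1)).mulVec (xvec φ α σv σw θ x ℓ) i)) ≤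
              Cφ * l2norm ((σw / Real.sqrt n) •
                (Wmat θ (ℓ + 1)).mulVec (xvec φ α σv σw θ x ℓ)) := by
            apply Helpers.l2norm_le_of_abs_le (le_of_lt hCφ)
            intro i
            exact hφ1 _
          refine le_trans h1 ?_
          apply mul_le_mul_of_nonneg_left ?_ (le_of_lt hCφ)
          rw [Helpers.l2norm_smul, ← hsn_def,
            abs_of_nonneg (by positivity : (0:ℝ) ≤ σw / sn)]
          apply mul_le_mul_of_nonneg_left ?_ (by positivity : (0:ℝ) ≤ σw / sn)
          calc l2norm ((Wmat θ (ℓ + 1)).mulVec (xvec φ α σv σw θ x ℓ)) ≤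
                specNorm (Wmat θ (ℓ + 1)) * l2norm (xvec φ α σv σw θ x ℓ) :=
                Helpers.specNorm_mulVec_le _ _
            _ ≤ 3 * sn * a := by
                apply mul_le_mul ?_ hxa (Helpers.l2norm_nonneg _) (by positivity)
                rw [hsn_def]; exact hW
        rw [← hsn_def] at hφg
        -- difference of φ of preactivations
        have hgd : ((σw / Real.sqrt n) •
              (Wmat θ (ℓ + 1)).mulVec (xvec φ α σv σw θ x ℓ)) -
            ((σw / Real.sqrt n) •
              (Wmat θ' (ℓ + 1)).mulVec (xvec φ α σv σw θ' x ℓ)) =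
            (σw / Real.sqrt n) •
              ((Wmat θ (ℓ + 1) - Wmat θ' (ℓ + 1)).mulVec (xvec φ α σv σw θ x ℓ) +
               (Wmat θ' (ℓ + 1)).mulVec
                 (xvec φ α σv σw θ x ℓ - xvec φ α σv σw θ' x ℓ)) := by
          simp only [Matrix.sub_mulVec, Matrix.mulVec_sub, smul_sub, smul_add]
          abel
        have hφdiff : l2norm ((fun i => φ ((σw / Real.sqrt n) *
              (Wmat θ (ℓ + 1)).mulVec (xvec φ α σv σw θ x ℓ) i)) -
            (fun i => φ ((σw / Real.sqrt n) *
              (Wmat θ' (ℓ + 1)).mulVec (xvec φ α σv σw θ' x ℓ) i))) ≤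
            Cφ * ((σw / sn) * (P * a + 3 * sn * (Dl * P))) := by
          have h1 : l2norm ((fun i => φ ((σw / Real.sqrt n) *
                (Wmat θ (ℓ + 1)).mulVec (xvec φ α σv σw θ x ℓ) i)) -
              (fun i => φ ((σw / Real.sqrt n) *
                (Wmat θ' (ℓ + 1)).mulVec (xvec φ α σv σw θ' x ℓ) i))) ≤
              Cφ * l2norm ((σw / Real.sqrt n) •
                ((Wmat θ (ℓ + 1) - Wmat θ' (ℓ + 1)).mulVec (xvec φ α σv σw θ x ℓ) +
                 (Wmat θ' (ℓ + 1)).mulVec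
                   (xvec φ α σv σw θ x ℓ - xvec φ α σv σw θ' x ℓ))) := by
            apply Helpers.l2norm_le_of_abs_le (le_of_lt hCφ)
            intro i
            rw [← hgd]
            simpa [Pi.sub_apply, Pi.smul_apply, smul_eq_mul] using
              hφlip ((σw / Real.sqrt n) *
                  (Wmat θ (ℓ + 1)).mulVec (xvec φ α σv σw θ x ℓ) i)
                ((σw / Real.sqrt n) *
                  (Wmat θ' (ℓ + 1)).mulVec (xvec φ α σv σw θ' x ℓ) i)
          refine le_trans h1 ?_
          apply mul_le_mul_of_nonneg_left ?_ (le_of_lt hCφ)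
          rw [Helpers.l2norm_smul, ← hsn_def,
            abs_of_nonneg (by positivity : (0:ℝ) ≤ σw / sn)]
          apply mul_le_mul_of_nonneg_left ?_ (by positivity : (0:ℝ) ≤ σw / sn)
          refine le_trans (Helpers.l2norm_add_le _ _) ?_
          apply add_le_add
          · calc l2norm ((Wmat θ (ℓ + 1) - Wmat θ' (ℓ + 1)).mulVec
                  (xvec φ α σv σw θ x ℓ)) ≤
                  frobNorm (Wmat θ (ℓ + 1) - Wmat θ' (ℓ + 1)) *
                    l2norm (xvec φ α σv σw θ x ℓ) := Helpers.l2norm_mulVec_le_frob _ _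
              _ ≤ P * a := by
                  apply mul_le_mul ?_ hxa (Helpers.l2norm_nonneg _) hP0
                  rw [hPdef]
                  exact Helpers.frob_W_sub θ θ' (Nat.succ_le_succ (Nat.zero_le ℓ)) hℓ1
          · calc l2norm ((Wmat θ' (ℓ + 1)).mulVec
                  (xvec φ α σv σw θ x ℓ - xvec φ α σv σw θ' x ℓ)) ≤
                  specNorm (Wmat θ' (ℓ + 1)) *
                    l2norm (xvec φ α σv σw θ x ℓ - xvec φ α σv σw θ' x ℓ) :=
                  Helpers.specNorm_mulVec_le _ _
              _ ≤ 3 * sn * (Dl * P) := by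
                  apply mul_le_mul ?_ ihv (Helpers.l2norm_nonneg _) (by positivity)
                  rw [hsn_def]; exact hW'
        rw [← hsn_def] at hφdiff
        -- decomposition of the difference at layer ℓ+1
        have hid : xvec φ α σv σw θ x (ℓ + 1) - xvec φ α σv σw θ' x (ℓ + 1) =
            (xvec φ α σv σw θ x ℓ - xvec φ α σv σw θ' x ℓ) +
            ((α * σv / Real.sqrt n) •
                ((Vmat θ (ℓ + 1) - Vmat θ' (ℓ + 1)).mulVec
                  (fun i => φ ((σw / Real.sqrt n) *
                    (Wmat θ (ℓ + 1)).mulVec (xvec φ α σv σw θ x ℓ) i))) +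
             (α * σv / Real.sqrt n) •
                ((Vmat θ' (ℓ + 1)).mulVec
                  ((fun i => φ ((σw / Real.sqrt n) *
                    (Wmat θ (ℓ + 1)).mulVec (xvec φ α σv σw θ x ℓ) i)) -
                   (fun i => φ ((σw / Real.sqrt n) *
                    (Wmat θ' (ℓ + 1)).mulVec (xvec φ α σv σw θ' x ℓ) i))))) := by
          simp only [xvec, Matrix.sub_mulVec, Matrix.mulVec_sub, smul_sub, smul_add]
          abel
        rw [hid]
        refine le_trans (Helpers.l2norm_add_le _ _) ?_
        refine le_trans (add_le_add le_rfl (Helpers.l2norm_add_le _ _)) ?_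
        have hT2 : l2norm ((α * σv / Real.sqrt n) •
            ((Vmat θ (ℓ + 1) - Vmat θ' (ℓ + 1)).mulVec
              (fun i => φ ((σw / Real.sqrt n) *
                (Wmat θ (ℓ + 1)).mulVec (xvec φ α σv σw θ x ℓ) i)))) ≤
            (α * σv / sn) * (P * (Cφ * ((σw / sn) * (3 * sn * a)))) := by
          rw [Helpers.l2norm_smul, ← hsn_def,
            abs_of_nonneg (by positivity : (0:ℝ) ≤ α * σv / sn)]
          apply mul_le_mul_of_nonneg_left ?_ (by positivity : (0:ℝ) ≤ α * σv / sn)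
          calc l2norm ((Vmat θ (ℓ + 1) - Vmat θ' (ℓ + 1)).mulVec _) ≤
                frobNorm (Vmat θ (ℓ + 1) - Vmat θ' (ℓ + 1)) * l2norm _ :=
                Helpers.l2norm_mulVec_le_frob _ _
            _ ≤ P * (Cφ * ((σw / sn) * (3 * sn * a))) := by
                apply mul_le_mul ?_ hφg (Helpers.l2norm_nonneg _) hP0
                rw [hPdef]
                exact Helpers.frob_V_sub θ θ' (Nat.succ_le_succ (Nat.zero_le ℓ)) hℓ1
        have hT3 : l2norm ((α * σv / Real.sqrt n) •
            ((Vmat θ' (ℓ + 1)).mulVec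
              ((fun i => φ ((σw / Real.sqrt n) *
                (Wmat θ (ℓ + 1)).mulVec (xvec φ α σv σw θ x ℓ) i)) -
               (fun i => φ ((σw / Real.sqrt n) *
                (Wmat θ' (ℓ + 1)).mulVec (xvec φ α σv σw θ' x ℓ) i))))) ≤
            (α * σv / sn) * (3 * sn * (Cφ * ((σw / sn) * (P * a + 3 * sn * (Dl * P))))) := by
          rw [Helpers.l2norm_smul, ← hsn_def,
            abs_of_nonneg (by positivity : (0:ℝ) ≤ α * σv / sn)]
          apply mul_le_mul_of_nonneg_left ?_ (by positivity : (0:ℝ) ≤ α * σv / sn)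
          calc l2norm ((Vmat θ' (ℓ + 1)).mulVec _) ≤
                specNorm (Vmat θ' (ℓ + 1)) * l2norm _ := Helpers.specNorm_mulVec_le _ _
            _ ≤ 3 * sn * (Cφ * ((σw / sn) * (P * a + 3 * sn * (Dl * P)))) := by
                apply mul_le_mul ?_ hφdiff (Helpers.l2norm_nonneg _) (by positivity)
                rw [hsn_def]; exact hV'
        refine le_trans (add_le_add ihv (add_le_add hT2 hT3)) ?_
        have hLHS : Dl * P + ((α * σv / sn) * (P * (Cφ * ((σw / sn) * (3 * sn * a)))) +
            (α * σv / sn) * (3 * sn * (Cφ * ((σw / sn) * (P * a + 3 * sn * (Dl * P)))))) =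
            (c * Dl + 18 * α * σv * σw * Cφ * B * c ^ ℓ) * P := by
          rw [ha_def, hc_def]
          field_simp
          ring
        rw [hLHS]
        apply mul_le_mul_of_nonneg_right ?_ hP0
        have hp1 : c ^ ℓ ≤ c ^ L := pow_le_pow_right₀ hc1 hℓL
        have hp2 : (1:ℝ) ≤ c ^ (ℓ + 1) := one_le_pow₀ hc1
        have h3 : 18 * α * σv * σw * Cφ * B * c ^ ℓ ≤ c ^ (ℓ + 1) * E := by
          rw [hE_def]
          calc 18 * α * σv * σw * Cφ * B * c ^ ℓ ≤
                18 * α * σv * σw * Cφ * B * c ^ L :=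
                mul_le_mul_of_nonneg_left hp1 (by positivity)
            _ = 1 * (18 * α * σv * σw * Cφ * B * c ^ L) := (one_mul _).symm
            _ ≤ c ^ (ℓ + 1) * (18 * α * σv * σw * Cφ * B * c ^ L) :=
                mul_le_mul_of_nonneg_right hp2 (by positivity)
        have h4 : c * Dl = c ^ (ℓ + 1) * B + ℓ * (c ^ (ℓ + 1) * E) := by
          rw [hDl_def]; ring
        rw [h4]
        push_cast
        linarith
    constructor
    · intro ℓ hℓL
      refine le_trans (hD ℓ hℓL) ?_
      apply mul_le_mul_of_nonneg_right ?_ hP0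
      have hp1 : c ^ ℓ ≤ c ^ L := pow_le_pow_right₀ hc1 hℓL
      have hcast : (ℓ : ℝ) ≤ (L : ℝ) := by exact_mod_cast hℓL
      have e1 : c ^ ℓ * B ≤ c ^ L * B := mul_le_mul_of_nonneg_right hp1 hB0
      have e2 : (ℓ:ℝ) * (c ^ ℓ * E) ≤ (L:ℝ) * (c ^ L * E) := by
        apply mul_le_mul hcast (mul_le_mul_of_nonneg_right hp1 hE0)
          (by positivity) (Nat.cast_nonneg L)
      rw [hKx_def]
      linarith
    · intro ℓ hℓ1 hℓL
      obtain ⟨hWa, hVa⟩ := hθ'.2.2 ℓ hℓ1 hℓL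
      have hm : ℓ - 1 ≤ L := le_trans (Nat.sub_le ℓ 1) hℓL
      obtain ⟨a, ha_def⟩ : ∃ a : ℝ, a = 3 * B * c ^ (ℓ - 1) * sn := ⟨_, rfl⟩
      have ha0 : 0 ≤ a := by rw [ha_def]; positivity
      have hxa : l2norm (xvec φ α σv σw θ x (ℓ - 1)) ≤ a := ha_def ▸ hxb θ hθ (ℓ - 1) hm
      obtain ⟨Dl, hDl_def⟩ : ∃ D : ℝ, D = c ^ (ℓ - 1) * B + (ℓ - 1 : ℕ) * (c ^ (ℓ - 1) * E) :=
        ⟨_, rfl⟩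
      have hDl0 : 0 ≤ Dl := by rw [hDl_def]; positivity
      have hxd : l2norm (xvec φ α σv σw θ x (ℓ - 1) - xvec φ α σv σw θ' x (ℓ - 1)) ≤
          Dl * P := hDl_def ▸ hD (ℓ - 1) hm
      have hid : gvec φ α σv σw θ x ℓ - gvec φ α σv σw θ' x ℓ =
          (σw / Real.sqrt n) •
            ((Wmat θ ℓ - Wmat θ' ℓ).mulVec (xvec φ α σv σw θ x (ℓ - 1)) +
             (Wmat θ' ℓ).mulVec
               (xvec φ α σv σw θ x (ℓ - 1) - xvec φ α σv σw θ' x (ℓ - 1))) := by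
        simp only [gvec, Matrix.sub_mulVec, Matrix.mulVec_sub, smul_sub, smul_add]
        abel
      rw [hid, Helpers.l2norm_smul, ← hsn_def,
        abs_of_nonneg (by positivity : (0:ℝ) ≤ σw / sn)]
      have hsum : l2norm ((Wmat θ ℓ - Wmat θ' ℓ).mulVec (xvec φ α σv σw θ x (ℓ - 1)) +
          (Wmat θ' ℓ).mulVec
            (xvec φ α σv σw θ x (ℓ - 1) - xvec φ α σv σw θ' x (ℓ - 1))) ≤
          P * a + 3 * sn * (Dl * P) := by
        refine le_trans (Helpers.l2norm_add_le _ _) ?_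
        apply add_le_add
        · calc l2norm ((Wmat θ ℓ - Wmat θ' ℓ).mulVec (xvec φ α σv σw θ x (ℓ - 1))) ≤
              frobNorm (Wmat θ ℓ - Wmat θ' ℓ) * l2norm (xvec φ α σv σw θ x (ℓ - 1)) :=
                Helpers.l2norm_mulVec_le_frob _ _
            _ ≤ P * a := by
                apply mul_le_mul ?_ hxa (Helpers.l2norm_nonneg _) hP0
                rw [hPdef]
                exact Helpers.frob_W_sub θ θ' hℓ1 hℓL
        · calc l2norm ((Wmat θ' ℓ).mulVec
                (xvec φ α σv σw θ x (ℓ - 1) - xvec φ α σv σw θ' x (ℓ - 1))) ≤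
              specNorm (Wmat θ' ℓ) *
                l2norm (xvec φ α σv σw θ x (ℓ - 1) - xvec φ α σv σw θ' x (ℓ - 1)) :=
                Helpers.specNorm_mulVec_le _ _
            _ ≤ 3 * sn * (Dl * P) := by
                apply mul_le_mul ?_ hxd (Helpers.l2norm_nonneg _) (by positivity)
                rw [hsn_def]; exact hWa
      refine le_trans (mul_le_mul_of_nonneg_left hsum
        (by positivity : (0:ℝ) ≤ σw / sn)) ?_
      have harith : (σw / sn) * (P * a + 3 * sn * (Dl * P)) =
          (σw * (3 * B * c ^ (ℓ - 1)) + 3 * σw * Dl) * P := by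
        rw [ha_def]
        field_simp
      rw [harith]
      apply mul_le_mul_of_nonneg_right ?_ hP0
      have hp1 : c ^ (ℓ - 1) ≤ c ^ L := pow_le_pow_right₀ hc1 hm
      have e1 : σw * (3 * B * c ^ (ℓ - 1)) ≤ σw * (3 * B * c ^ L) := by
        apply mul_le_mul_of_nonneg_left ?_ (le_of_lt hσw)
        apply mul_le_mul_of_nonneg_left hp1 (by positivity)
      have e2 : 3 * σw * Dl ≤ 3 * σw * Kx := by
        apply mul_le_mul_of_nonneg_left ?_ (by positivity)
        rw [hDl_def, hKx_def]
        have hcast : ((ℓ - 1 : ℕ) : ℝ) ≤ (L : ℝ) := by exact_mod_cast hm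
        have := mul_le_mul hcast (mul_le_mul_of_nonneg_right hp1 hE0)
          (by positivity) (Nat.cast_nonneg L)
        nlinarith [mul_le_mul_of_nonneg_right hp1 hB0]
      rw [hKg_def]
      linarith


end
end
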